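/- Let f be a finite composition of generalized Hénon maps over ℂ, and let p₀ be a saddle fixed point of f: f(p₀) = p₀ and the eigenvalues u, s of the Jacobian matrix Df(p₀) satisfy |u| > 1 > |s|. Then the stable manifold W^s(p₀) = {q ∈ ℂ² : f^n(q) → p₀ as n → ∞} is not contained in the set K⁻ = {q ∈ ℂ² : sup_{n ≥ 0} ‖f^{-n}(q)‖ < ∞} of points with bounded backward orbit; that is, there exists q with f^n(q) → p₀ as n → ∞ whose backward orbit (f^{-n}(q))_{n ≥ 0} is unbounded. -/

import Mathlib

open MvPolynomial

noncomputable section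

/-- Evaluate a pair of bivariate polynomials at a point of `K × K`. -/
def evalPair {K : Type*} [CommSemiring K] (P Q : MvPolynomial (Fin 2) K) (p : K × K) : K × K :=
  (MvPolynomial.eval ![p.1, p.2] P, MvPolynomial.eval ![p.1, p.2] Q)

/-- A map `K² → K²` is a polynomial map if it is given coordinatewise by polynomials. -/
def IsPolyMap {K : Type*} [CommSemiring K] (f : K × K → K × K) : Prop :=
  ∃ P Q : MvPolynomial (Fin 2) K, ∀ p, f p = evalPair P Q p

/-- A polynomial automorphism of the affine plane: a bijection such that it and its inverse
are both polynomial maps. -/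
def IsPolyAut {K : Type*} [CommSemiring K] (f : Equiv.Perm (K × K)) : Prop :=
  IsPolyMap (⇑f) ∧ IsPolyMap (⇑f.symm)

/-- `f` has degree `d` : it is given coordinatewise by a pair of polynomials whose maximum
total degree is `d`. -/
def HasDeg {K : Type*} [CommSemiring K] (f : K × K → K × K) (d : ℕ) : Prop :=
  ∃ P Q : MvPolynomial (Fin 2) K, (∀ p, f p = evalPair P Q p) ∧
    max P.totalDegree Q.totalDegree = d

/-- `f` is of Hénon type: some conjugate `h = φ ∘ f ∘ φ⁻¹` satisfies `deg h = d ≥ 2` and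
`deg (h^n) = d^n` for all `n ≥ 1`. -/
def HenonType {K : Type*} [CommSemiring K] (f : Equiv.Perm (K × K)) : Prop :=
  IsPolyAut f ∧ ∃ (φ : Equiv.Perm (K × K)) (d : ℕ), IsPolyAut φ ∧ 2 ≤ d ∧
    ∀ n : ℕ, 1 ≤ n → HasDeg (⇑((φ * f * φ⁻¹) ^ n)) (d ^ n)

/-- `j` is the (constant) value of the Jacobian determinant of `f`. -/
def HasJacobian {K : Type*} [CommRing K] (f : Equiv.Perm (K × K)) (j : K) : Prop :=
  ∃ P Q : MvPolynomial (Fin 2) K, (∀ p, f p = evalPair P Q p) ∧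
    ∀ p : K × K,
      eval ![p.1, p.2] (pderiv 0 P) * eval ![p.1, p.2] (pderiv 1 Q)
        - eval ![p.1, p.2] (pderiv 1 P) * eval ![p.1, p.2] (pderiv 0 Q) = j

/-- `p` is a periodic point of `f`. -/
def IsPeriodicPt {K : Type*} (f : Equiv.Perm (K × K)) (p : K × K) : Prop :=
  ∃ n : ℕ, 1 ≤ n ∧ (f ^ n) p = p

/-- `M` is the Jacobian matrix of the polynomial map `f` at the point `p`. -/
def HasJacMatrix {K : Type*} [CommRing K] (f : K × K → K × K) (p : K × K)
    (M : Matrix (Fin 2) (Fin 2) K) : Prop :=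
  ∃ P Q : MvPolynomial (Fin 2) K, (∀ q, f q = evalPair P Q q) ∧
    M = !![eval ![p.1, p.2] (pderiv 0 P), eval ![p.1, p.2] (pderiv 1 P);
           eval ![p.1, p.2] (pderiv 0 Q), eval ![p.1, p.2] (pderiv 1 Q)]

end

/-- A generalized Hénon map `(x,y) ↦ (a y, x + P(y))` with `a ≠ 0` and `deg P ≥ 2`. -/
def IsGenHenon (h : ℂ × ℂ → ℂ × ℂ) : Prop :=
  ∃ (a : ℂ) (P : Polynomial ℂ), a ≠ 0 ∧ 2 ≤ P.natDegree ∧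
    ∀ p : ℂ × ℂ, h p = (a * p.2, p.1 + P.eval p.2)



open Filter in
lemma poly_lower (P : Polynomial ℂ) (hP : 2 ≤ P.natDegree) (Cc : ℝ) :
    ∃ R : ℝ, 1 ≤ R ∧ ∀ y : ℂ, R ≤ ‖y‖ → Cc * ‖y‖ ≤ ‖P.eval y‖ := by
  have hdeg : 0 < P.divX.degree := by
    have h0 : P.divX.natDegree = P.natDegree - 1 :=
      Polynomial.natDegree_divX_eq_natDegree_tsub_one
    have h1 : 1 ≤ P.divX.natDegree := by omega
    exact Polynomial.natDegree_pos_iff_degree_pos.mp (by omega)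
  have h1 : Tendsto (fun y : ℂ => ‖P.divX.eval y‖) (comap norm atTop) atTop :=
    Polynomial.tendsto_norm_atTop _ hdeg tendsto_comap
  have h2 := h1.eventually_ge_atTop (|Cc| + 1 + ‖P.coeff 0‖)
  rw [Filter.eventually_comap] at h2
  rw [Filter.eventually_atTop] at h2
  obtain ⟨R₀, hR₀⟩ := h2
  refine ⟨max 1 R₀, le_max_left _ _, fun y hy => ?_⟩
  have hy1 : (1:ℝ) ≤ ‖y‖ := le_trans (le_max_left _ _) hy
  have hDy : |Cc| + 1 + ‖P.coeff 0‖ ≤ ‖P.divX.eval y‖ :=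
    hR₀ ‖y‖ (le_trans (le_max_right _ _) hy) y rfl
  have key : y * P.divX.eval y + P.coeff 0 = P.eval y := by
    calc y * P.divX.eval y + P.coeff 0
        = Polynomial.eval y (Polynomial.X * P.divX + Polynomial.C (P.coeff 0)) := by
          simp only [Polynomial.eval_add, Polynomial.eval_mul, Polynomial.eval_X,
            Polynomial.eval_C]
    _ = P.eval y := by rw [Polynomial.X_mul_divX_add]
  rw [← key]
  have h4 : ‖y * P.divX.eval y‖ ≤ ‖y * P.divX.eval y + P.coeff 0‖ + ‖P.coeff 0‖ := by
    have := norm_add_le (y * P.divX.eval y + P.coeff 0) (-(P.coeff 0))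
    simpa using this
  rw [norm_mul] at h4
  nlinarith [norm_nonneg (P.coeff 0), norm_nonneg y, abs_nonneg Cc, le_abs_self Cc,
    norm_nonneg (y * P.divX.eval y + P.coeff 0), norm_nonneg (P.divX.eval y)]

lemma henon_fwd_step (a : ℂ) (P : Polynomial ℂ) (hP : 2 ≤ P.natDegree) :
    ∃ R : ℝ, 1 ≤ R ∧ ∀ x y : ℂ, ‖x‖ ≤ ‖y‖ → R ≤ ‖y‖ →
      ‖a * y‖ ≤ ‖x + P.eval y‖ ∧ 2 * ‖y‖ ≤ ‖x + P.eval y‖ := by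
  obtain ⟨R, hR1, hR⟩ := poly_lower P hP (‖a‖ + 3)
  refine ⟨R, hR1, fun x y hxy hRy => ?_⟩
  have h1 := hR y hRy
  have h2 : ‖P.eval y‖ ≤ ‖x + P.eval y‖ + ‖x‖ := by
    have := norm_add_le (x + P.eval y) (-x)
    simpa [add_comm] using this
  rw [norm_mul]
  constructor <;> nlinarith [norm_nonneg x, norm_nonneg y, norm_nonneg a]

lemma henon_bwd_step (a : ℂ) (P : Polynomial ℂ) (ha : a ≠ 0) (hP : 2 ≤ P.natDegree) :
    ∃ R : ℝ, 1 ≤ R ∧ ∀ x y : ℂ, ‖y‖ ≤ ‖x‖ → R ≤ ‖x‖ →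
      ‖a⁻¹ * x‖ ≤ ‖y - P.eval (a⁻¹ * x)‖ ∧ 2 * ‖x‖ ≤ ‖y - P.eval (a⁻¹ * x)‖ := by
  obtain ⟨R₀, hR₀1, hR₀⟩ := poly_lower P hP ((3 + ‖a⁻¹‖) * ‖a‖)
  have hapos : 0 < ‖a‖ := norm_pos_iff.mpr ha
  refine ⟨max 1 (‖a‖ * R₀), le_max_left _ _, fun x y hxy hRx => ?_⟩
  have hx1 : (1:ℝ) ≤ ‖x‖ := le_trans (le_max_left _ _) hRx
  have hx2 : ‖a‖ * R₀ ≤ ‖x‖ := le_trans (le_max_right _ _) hRx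
  have hz : R₀ ≤ ‖a⁻¹ * x‖ := by
    rw [norm_mul, norm_inv, inv_mul_eq_div, le_div_iff₀ hapos]
    calc R₀ * ‖a‖ = ‖a‖ * R₀ := mul_comm _ _
    _ ≤ ‖x‖ := hx2
  have h1 := hR₀ _ hz
  rw [norm_mul, norm_inv] at h1
  have h2 : ‖P.eval (a⁻¹ * x)‖ ≤ ‖y - P.eval (a⁻¹ * x)‖ + ‖y‖ := by
    have := norm_add_le (y - P.eval (a⁻¹ * x)) (-y)
    simpa [norm_neg, sub_eq_add_neg, add_comm, add_left_comm, add_assoc] using this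
  have ha1 : ‖a‖ * ‖a‖⁻¹ = 1 := mul_inv_cancel₀ (ne_of_gt hapos)
  have h1' : (3 + ‖a‖⁻¹) * ‖x‖ ≤ ‖Polynomial.eval (a⁻¹ * x) P‖ := by
    have heq : (3 + ‖a‖⁻¹) * ‖a‖ * (‖a‖⁻¹ * ‖x‖) = (3 + ‖a‖⁻¹) * ‖x‖ := by
      calc (3 + ‖a‖⁻¹) * ‖a‖ * (‖a‖⁻¹ * ‖x‖)
          = (‖a‖ * ‖a‖⁻¹) * ((3 + ‖a‖⁻¹) * ‖x‖) := by ring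
      _ = (3 + ‖a‖⁻¹) * ‖x‖ := by rw [ha1]; ring
    linarith [h1, heq.symm.le, heq.le]
  rw [norm_mul, norm_inv]
  constructor <;> nlinarith [norm_nonneg x, norm_nonneg y, norm_nonneg a,
    inv_nonneg.mpr (norm_nonneg a), norm_nonneg (y - P.eval (a⁻¹ * x)),
    mul_nonneg (inv_nonneg.mpr (norm_nonneg a)) (norm_nonneg x)]



lemma contDiff_polyeval (P : Polynomial ℂ) : ContDiff ℂ ⊤ fun z : ℂ => P.eval z := by
  have h : (fun z : ℂ => P.eval z)
      = fun z => ∑ i ∈ Finset.range (P.natDegree + 1), P.coeff i * z ^ i :=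
    funext fun z => Polynomial.eval_eq_sum_range z
  rw [h]
  exact ContDiff.sum fun i _ => contDiff_const.mul (contDiff_id.pow i)

lemma list_escape : ∀ (L : List ((ℂ × ℂ) → ℂ × ℂ)), (∀ h ∈ L, IsGenHenon h) →
    ∃ R : ℝ, 1 ≤ R ∧ ∃ gi : ℂ × ℂ → ℂ × ℂ,
      (∀ q, gi (L.foldr (· ∘ ·) id q) = q) ∧
      (∀ q, L.foldr (· ∘ ·) id (gi q) = q) ∧
      ContDiff ℂ ⊤ gi ∧
      (∀ q : ℂ × ℂ, ‖q.1‖ ≤ ‖q.2‖ → R ≤ ‖q.2‖ →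
        ‖(L.foldr (· ∘ ·) id q).1‖ ≤ ‖(L.foldr (· ∘ ·) id q).2‖ ∧
        2 ^ L.length * ‖q.2‖ ≤ ‖(L.foldr (· ∘ ·) id q).2‖) ∧
      (∀ q : ℂ × ℂ, ‖q.2‖ ≤ ‖q.1‖ → R ≤ ‖q.1‖ →
        ‖(gi q).2‖ ≤ ‖(gi q).1‖ ∧ 2 ^ L.length * ‖q.1‖ ≤ ‖(gi q).1‖) := by
  intro L
  induction L with
  | nil =>
    intro _
    exact ⟨1, le_refl _, id, fun q => rfl, fun q => rfl, contDiff_id,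
      fun q h1 h2 => ⟨h1, by simpa using le_refl _⟩,
      fun q h1 h2 => ⟨h1, by simpa using le_refl _⟩⟩
  | cons h L ih =>
    intro hhen
    obtain ⟨a, P, ha, hP, hform⟩ := hhen h List.mem_cons_self
    obtain ⟨R', hR'1, gi', hgi1, hgi2, hgiCD, hfwd', hbwd'⟩ :=
      ih (fun h' hh' => hhen h' (List.mem_cons_of_mem _ hh'))
    obtain ⟨Rf, hRf1, hRf⟩ := henon_fwd_step a P hP
    obtain ⟨Rb, hRb1, hRb⟩ := henon_bwd_step a P ha hP
    set F' := L.foldr (· ∘ ·) id with hF'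
    have hcons : ∀ q, (h :: L).foldr (· ∘ ·) id q = h (F' q) := fun q => rfl
    set hinv : ℂ × ℂ → ℂ × ℂ := fun q => (q.2 - P.eval (a⁻¹ * q.1), a⁻¹ * q.1) with hhinv
    have hinv_h : ∀ q : ℂ × ℂ, hinv (h q) = q := by
      intro q
      rw [hform q]
      simp only [hhinv]
      have h2 : a⁻¹ * (a * q.2) = q.2 := by field_simp
      rw [h2]
      simp
    have h_hinv : ∀ q : ℂ × ℂ, h (hinv q) = q := by
      intro q
      rw [hform (hinv q)]
      simp only [hhinv]
      have h2 : a * (a⁻¹ * q.1) = q.1 := by field_simp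
      simp [h2]
    refine ⟨max R' (max Rf Rb), le_trans hR'1 (le_max_left _ _),
      fun q => gi' (hinv q), ?_, ?_, ?_, ?_, ?_⟩
    · intro q
      show gi' (hinv (h (F' q))) = q
      rw [hinv_h, hgi1]
    · intro q
      show h (F' (gi' (hinv q))) = q
      rw [hgi2, h_hinv]
    · refine hgiCD.comp (ContDiff.prodMk ?_ ?_)
      · exact contDiff_snd.sub ((contDiff_polyeval P).comp (contDiff_const.mul contDiff_fst))
      · exact contDiff_const.mul contDiff_fst
    · intro q hq1 hq2
      have hfa := hfwd' q hq1 (le_trans (le_max_left _ _) hq2)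
      have hlen1 : (1:ℝ) ≤ 2 ^ L.length := one_le_pow₀ (by norm_num)
      have hy2 : ‖q.2‖ ≤ ‖(F' q).2‖ := by nlinarith [norm_nonneg q.2, hfa.2]
      have hRfy : Rf ≤ ‖(F' q).2‖ :=
        le_trans (le_trans (le_max_left _ _) (le_trans (le_max_right _ _) hq2)) hy2
      have hstep := hRf (F' q).1 (F' q).2 hfa.1 hRfy
      have hform2 : (h :: L).foldr (· ∘ ·) id q = (a * (F' q).2, (F' q).1 + P.eval (F' q).2) := by
        rw [hcons, hform]
      rw [hform2]
      refine ⟨hstep.1, ?_⟩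
      simp only [List.length_cons, pow_succ]
      nlinarith [hstep.2, hfa.2, norm_nonneg q.2]
    · intro q hq1 hq2
      have hRbx : Rb ≤ ‖q.1‖ := le_trans (le_trans (le_max_right _ _) (le_max_right _ _)) hq2
      have hstep := hRb q.1 q.2 hq1 hRbx
      have hq'1 : ‖(hinv q).2‖ ≤ ‖(hinv q).1‖ := hstep.1
      have hq'2 : 2 * ‖q.1‖ ≤ ‖(hinv q).1‖ := hstep.2
      have hR'x : R' ≤ ‖(hinv q).1‖ := by
        have : R' ≤ ‖q.1‖ := le_trans (le_max_left _ _) hq2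
        nlinarith [norm_nonneg q.1]
      have hb := hbwd' (hinv q) hq'1 hR'x
      refine ⟨hb.1, ?_⟩
      simp only [List.length_cons, pow_succ]
      nlinarith [hb.2, norm_nonneg q.1, one_le_pow₀ (by norm_num : (1:ℝ) ≤ 2) (n := L.length)]

lemma iterate_escape_fwd (F : ℂ × ℂ → ℂ × ℂ) (R : ℝ) (hR : 1 ≤ R)
    (hF : ∀ q : ℂ × ℂ, ‖q.1‖ ≤ ‖q.2‖ → R ≤ ‖q.2‖ →
      ‖(F q).1‖ ≤ ‖(F q).2‖ ∧ 2 * ‖q.2‖ ≤ ‖(F q).2‖) :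
    ∀ q : ℂ × ℂ, ‖q.1‖ ≤ ‖q.2‖ → R ≤ ‖q.2‖ → ∀ n : ℕ,
      ‖(F^[n] q).1‖ ≤ ‖(F^[n] q).2‖ ∧ R ≤ ‖(F^[n] q).2‖ ∧
      2 ^ n * ‖q.2‖ ≤ ‖(F^[n] q).2‖ := by
  intro q hq1 hq2 n
  induction n with
  | zero => exact ⟨hq1, hq2, by simpa using le_refl _⟩
  | succ n ihn =>
    obtain ⟨i1, i2, i3⟩ := ihn
    have hstep := hF _ i1 i2
    rw [Function.iterate_succ_apply']
    refine ⟨hstep.1, ?_, ?_⟩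
    · nlinarith [hstep.2, norm_nonneg (F^[n] q).2]
    · rw [pow_succ]
      nlinarith [hstep.2, norm_nonneg q.2, one_le_pow₀ (by norm_num : (1:ℝ) ≤ 2) (n := n)]



lemma iterate_escape_bwd (F : ℂ × ℂ → ℂ × ℂ) (R : ℝ) (hR : 1 ≤ R)
    (hF : ∀ q : ℂ × ℂ, ‖q.2‖ ≤ ‖q.1‖ → R ≤ ‖q.1‖ →
      ‖(F q).2‖ ≤ ‖(F q).1‖ ∧ 2 * ‖q.1‖ ≤ ‖(F q).1‖) :
    ∀ q : ℂ × ℂ, ‖q.2‖ ≤ ‖q.1‖ → R ≤ ‖q.1‖ → ∀ n : ℕ,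
      ‖(F^[n] q).2‖ ≤ ‖(F^[n] q).1‖ ∧ R ≤ ‖(F^[n] q).1‖ ∧
      2 ^ n * ‖q.1‖ ≤ ‖(F^[n] q).1‖ := by
  intro q hq1 hq2 n
  induction n with
  | zero => exact ⟨hq1, hq2, by simpa using le_refl _⟩
  | succ n ihn =>
    obtain ⟨i1, i2, i3⟩ := ihn
    have hstep := hF _ i1 i2
    rw [Function.iterate_succ_apply']
    refine ⟨hstep.1, ?_, ?_⟩
    · nlinarith [hstep.2, norm_nonneg (F^[n] q).1]
    · rw [pow_succ]
      nlinarith [hstep.2, norm_nonneg q.1, one_le_pow₀ (by norm_num : (1:ℝ) ≤ 2) (n := n)]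



open MvPolynomial in
lemma hasFDerivAt_evalmv (P : MvPolynomial (Fin 2) ℂ) (p : ℂ × ℂ) :
    HasFDerivAt (fun q : ℂ × ℂ => eval ![q.1, q.2] P)
      ((eval ![p.1, p.2] (pderiv 0 P)) • (ContinuousLinearMap.fst ℂ ℂ ℂ)
        + (eval ![p.1, p.2] (pderiv 1 P)) • (ContinuousLinearMap.snd ℂ ℂ ℂ)) p := by
  induction P using MvPolynomial.induction_on with
  | C a =>
    have h : (fun q : ℂ × ℂ => eval ![q.1, q.2] (C a : MvPolynomial (Fin 2) ℂ)) =
        fun _ : ℂ × ℂ => a := by funext q; simp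
    rw [h]
    have h2 : (eval ![p.1, p.2] (pderiv 0 (C a : MvPolynomial (Fin 2) ℂ)))
          • (ContinuousLinearMap.fst ℂ ℂ ℂ)
        + (eval ![p.1, p.2] (pderiv 1 (C a : MvPolynomial (Fin 2) ℂ)))
          • (ContinuousLinearMap.snd ℂ ℂ ℂ) = 0 := by
      simp only [pderiv_C, map_zero]
      refine ContinuousLinearMap.ext fun z => ?_
      simp
    rw [h2]
    exact hasFDerivAt_const a p
  | add f g hf hg =>
    have h : (fun q : ℂ × ℂ => eval ![q.1, q.2] (f + g)) =
        fun q : ℂ × ℂ => eval ![q.1, q.2] f + eval ![q.1, q.2] g := by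
      funext q; simp
    rw [h]
    refine (hf.add hg).congr_fderiv ?_
    refine ContinuousLinearMap.ext fun z => ?_
    simp only [map_add, ContinuousLinearMap.add_apply, ContinuousLinearMap.coe_smul',
      Pi.smul_apply, ContinuousLinearMap.coe_fst', ContinuousLinearMap.coe_snd', smul_eq_mul]
    ring
  | mul_X f i hf =>
    have hi : i = 0 ∨ i = 1 := by
      rcases i with ⟨iv, hiv⟩
      interval_cases iv
      · exact Or.inl rfl
      · exact Or.inr rfl
    rcases hi with rfl | rfl
    · have h : (fun q : ℂ × ℂ => eval ![q.1, q.2] (f * X 0)) =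
          fun q : ℂ × ℂ => eval ![q.1, q.2] f * q.1 := by
        funext q; simp
      rw [h]
      have hfst : HasFDerivAt (fun q : ℂ × ℂ => q.1) (ContinuousLinearMap.fst ℂ ℂ ℂ) p :=
        hasFDerivAt_fst
      refine (hf.mul hfst).congr_fderiv ?_
      refine ContinuousLinearMap.ext fun z => ?_
      simp only [pderiv_mul, map_add, map_mul, pderiv_X_self,
        pderiv_X_of_ne (by decide : (0 : Fin 2) ≠ 1), eval_X, map_one, mul_one, mul_zero,
        add_zero, eval_mul, ContinuousLinearMap.add_apply, ContinuousLinearMap.coe_smul',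
        Pi.smul_apply, ContinuousLinearMap.coe_fst', ContinuousLinearMap.coe_snd', smul_eq_mul,
        Matrix.cons_val_zero, Matrix.cons_val_one, Matrix.head_cons]
      ring
    · have h : (fun q : ℂ × ℂ => eval ![q.1, q.2] (f * X 1)) =
          fun q : ℂ × ℂ => eval ![q.1, q.2] f * q.2 := by
        funext q; simp
      rw [h]
      have hsnd : HasFDerivAt (fun q : ℂ × ℂ => q.2) (ContinuousLinearMap.snd ℂ ℂ ℂ) p :=
        hasFDerivAt_snd
      refine (hf.mul hsnd).congr_fderiv ?_
      refine ContinuousLinearMap.ext fun z => ?_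
      simp only [pderiv_mul, map_add, map_mul, pderiv_X_self,
        pderiv_X_of_ne (by decide : (1 : Fin 2) ≠ 0), eval_X, map_one, mul_one, mul_zero,
        add_zero, eval_mul, ContinuousLinearMap.add_apply, ContinuousLinearMap.coe_smul',
        Pi.smul_apply, ContinuousLinearMap.coe_fst', ContinuousLinearMap.coe_snd', smul_eq_mul,
        Matrix.cons_val_zero, Matrix.cons_val_one, Matrix.head_cons]
      ring



lemma eigvec (M : Matrix (Fin 2) (Fin 2) ℂ) (u s : ℂ)
    (htr : u + s = M.trace) (hdet : u * s = M.det) (e : ℂ) (he : e = u ∨ e = s) :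
    ∃ v : ℂ × ℂ, v ≠ 0 ∧ M 0 0 * v.1 + M 0 1 * v.2 = e * v.1 ∧
      M 1 0 * v.1 + M 1 1 * v.2 = e * v.2 := by
  have htr' : u + s = M 0 0 + M 1 1 := by rw [htr, Matrix.trace_fin_two]
  have hdet' : u * s = M 0 0 * M 1 1 - M 0 1 * M 1 0 := by rw [hdet, Matrix.det_fin_two]
  set N : Matrix (Fin 2) (Fin 2) ℂ := M - e • 1 with hNdef
  have hN00 : N 0 0 = M 0 0 - e := by simp [hNdef, Matrix.one_apply]
  have hN01 : N 0 1 = M 0 1 := by simp [hNdef, Matrix.one_apply]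
  have hN10 : N 1 0 = M 1 0 := by simp [hNdef, Matrix.one_apply]
  have hN11 : N 1 1 = M 1 1 - e := by simp [hNdef, Matrix.one_apply]
  have hdetN : N.det = 0 := by
    rw [Matrix.det_fin_two, hN00, hN01, hN10, hN11]
    rcases he with rfl | rfl
    · linear_combination - hdet' + e * htr'
    · linear_combination - hdet' + e * htr'
  obtain ⟨vv, hvv0, hvvz⟩ := (Matrix.exists_mulVec_eq_zero_iff).mpr hdetN
  refine ⟨(vv 0, vv 1), ?_, ?_, ?_⟩
  · intro hcon
    apply hvv0
    funext i
    have h0 : vv 0 = 0 := congrArg Prod.fst hcon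
    have h1 : vv 1 = 0 := congrArg Prod.snd hcon
    fin_cases i <;> simpa [h0, h1]
  · have := congrFun hvvz 0
    rw [Matrix.mulVec, dotProduct] at this
    simp only [Fin.sum_univ_two] at this
    rw [hN00, hN01] at this
    have h2 : (M 0 0 - e) * vv 0 + M 0 1 * vv 1 = 0 := this
    linear_combination h2
  · have := congrFun hvvz 1
    rw [Matrix.mulVec, dotProduct] at this
    simp only [Fin.sum_univ_two] at this
    rw [hN10, hN11] at this
    have h2 : M 1 0 * vv 0 + (M 1 1 - e) * vv 1 = 0 := this
    linear_combination h2

lemma eig_indep (A : (ℂ × ℂ) →L[ℂ] (ℂ × ℂ)) (v w : ℂ × ℂ) (a b : ℂ)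
    (hv : A v = a • v) (hw : A w = b • w) (hvne : v ≠ 0) (hwne : w ≠ 0) (hab : a ≠ b) :
    v.1 * w.2 - v.2 * w.1 ≠ 0 := by
  intro hd0
  have key : ∀ c : ℂ, w = c • v → False := by
    intro c hwc
    have hc0 : c ≠ 0 := by
      intro hc
      rw [hc, zero_smul] at hwc
      exact hwne hwc
    have h1 : A w = (c * a) • v := by
      rw [hwc, map_smul, hv, smul_smul]
    have h2 : A w = (b * c) • v := by
      rw [hw, hwc, smul_smul]
    have h3 : ((c * a) - (b * c)) • v = 0 := by
      rw [sub_smul, ← h1, ← h2, sub_self]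
    rcases smul_eq_zero.mp h3 with h4 | h4
    · have : c * (a - b) = 0 := by linear_combination h4
      rcases mul_eq_zero.mp this with h5 | h5
      · exact hc0 h5
      · exact hab (by linear_combination h5)
    · exact hvne h4
  by_cases hv1 : v.1 = 0
  · have hv2 : v.2 ≠ 0 := by
      intro h2
      exact hvne (Prod.ext hv1 h2)
    have hw1 : w.1 = 0 := by
      have : v.2 * w.1 = 0 := by linear_combination - hd0 + w.2 * hv1
      rcases mul_eq_zero.mp this with h | h
      · exact absurd h hv2
      · exact h
    refine key (w.2 / v.2) ?_
    refine Prod.ext ?_ ?_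
    · simp only [Prod.smul_fst, smul_eq_mul]
      rw [hw1, hv1, mul_zero]
    · simp only [Prod.smul_snd, smul_eq_mul]
      rw [div_mul_cancel₀ _ hv2]
  · refine key (w.1 / v.1) ?_
    refine Prod.ext ?_ ?_
    · simp only [Prod.smul_fst, smul_eq_mul]
      rw [div_mul_cancel₀ _ hv1]
    · simp only [Prod.smul_snd, smul_eq_mul]
      rw [div_mul_eq_mul_div, eq_div_iff hv1]
      linear_combination hd0



set_option maxHeartbeats 2000000 in
open Metric Filter in
lemma core_estimate (G : ℂ × ℂ → ℂ × ℂ) (s : ℂ) (Λ : ℂ × ℂ →L[ℂ] ℂ × ℂ)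
    (K₂ Kc r : ℝ) (hs : ‖s‖ < 1) (hs0 : s ≠ 0) (hK₂pos : 0 < K₂)
    (hquad : ∀ z : ℂ × ℂ, ‖z‖ ≤ 1 → ‖G z - Λ z‖ ≤ K₂ * ‖z‖ ^ 2)
    (hΛnorm : ∀ z : ℂ × ℂ, ‖Λ z‖ ≤ ‖s‖⁻¹ * ‖z‖)
    (hΛe : ∀ c : ℂ, Λ (c • ((1:ℂ), (0:ℂ))) = (s⁻¹ * c) • ((1:ℂ), (0:ℂ)))
    (hKcpos : 0 < Kc) (hKckey : Kc * ‖s‖ + 4 * K₂ * ‖s‖ ^ 2 ≤ Kc)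
    (hrpos : 0 < r) (hrK : Kc * r ≤ 1) (hr1 : 2 * r ≤ 1) :
    ∀ k j : ℕ, ∀ t : ℂ, ‖t‖ ≤ r →
      ‖G^[k] ((s ^ (k + j) * t) • ((1:ℂ), (0:ℂ))) - (s ^ j * t) • ((1:ℂ), (0:ℂ))‖
        ≤ Kc * ‖t‖ ^ 2 * ‖s‖ ^ (2 * j) := by
  have hspos : 0 < ‖s‖ := norm_pos_iff.mpr hs0
  have hne₁ : ∀ c : ℂ, ‖c • ((1:ℂ), (0:ℂ))‖ = ‖c‖ := by
    intro c
    rw [Prod.smul_def]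
    simp [Prod.norm_def]
  intro k
  induction k with
  | zero =>
    intro j t ht
    simp only [Function.iterate_zero, id_eq, Nat.zero_add, zero_add]
    rw [sub_self]
    simp only [norm_zero]
    positivity
  | succ k ih =>
    intro j t ht
    have hstep : (k + 1) + j = k + (j + 1) := by omega
    rw [hstep, Function.iterate_succ_apply']
    set w : ℂ × ℂ := G^[k] ((s ^ (k + (j + 1)) * t) • ((1:ℂ), (0:ℂ))) with hwdef
    set mid : ℂ × ℂ := (s ^ (j + 1) * t) • ((1:ℂ), (0:ℂ)) with hmiddef
    have hIH : ‖w - mid‖ ≤ Kc * ‖t‖ ^ 2 * ‖s‖ ^ (2 * (j + 1)) := ih (j + 1) t ht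
    have hsle1 : ‖s‖ ≤ 1 := le_of_lt hs
    have hsj : ‖s‖ ^ (j + 1) ≤ 1 := pow_le_one₀ (norm_nonneg s) hsle1
    have hmidn : ‖mid‖ = ‖s‖ ^ (j + 1) * ‖t‖ := by
      rw [hmiddef, hne₁, norm_mul, norm_pow]
    have h2j : ‖s‖ ^ (2 * (j + 1)) = ‖s‖ ^ (j + 1) * ‖s‖ ^ (j + 1) := by
      rw [← pow_add]; ring_nf
    have hKt : Kc * ‖t‖ ≤ 1 := by
      have : Kc * ‖t‖ ≤ Kc * r := by nlinarith
      linarith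
    have hBA : (0:ℝ) ≤ ‖t‖ * ‖s‖ ^ (j + 1) :=
      mul_nonneg (norm_nonneg t) (pow_nonneg (norm_nonneg s) _)
    have herrsmall : Kc * ‖t‖ ^ 2 * ‖s‖ ^ (2 * (j + 1)) ≤ ‖s‖ ^ (j + 1) * ‖t‖ := by
      rw [h2j]
      have h1 : Kc * ‖t‖ * ‖s‖ ^ (j + 1) ≤ 1 := by
        nlinarith [mul_nonneg hKcpos.le (norm_nonneg t)]
      calc Kc * ‖t‖ ^ 2 * (‖s‖ ^ (j + 1) * ‖s‖ ^ (j + 1))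
          = (Kc * ‖t‖ * ‖s‖ ^ (j + 1)) * (‖t‖ * ‖s‖ ^ (j + 1)) := by ring
      _ ≤ 1 * (‖t‖ * ‖s‖ ^ (j + 1)) := mul_le_mul_of_nonneg_right h1 hBA
      _ = ‖s‖ ^ (j + 1) * ‖t‖ := by ring
    have hwn : ‖w‖ ≤ 2 * (‖s‖ ^ (j + 1) * ‖t‖) := by
      have h1 : ‖w‖ ≤ ‖mid‖ + ‖w - mid‖ := by
        have := norm_add_le mid (w - mid)
        simpa using this
      rw [hmidn] at h1
      linarith [hIH, herrsmall]
    have hwn1 : ‖w‖ ≤ 1 := by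
      have h2 : ‖s‖ ^ (j + 1) * ‖t‖ ≤ ‖t‖ := by
        nlinarith [norm_nonneg t]
      nlinarith [hr1]
    have hq := hquad w hwn1
    have hΛmid : Λ mid = (s ^ j * t) • ((1:ℂ), (0:ℂ)) := by
      rw [hmiddef, hΛe]
      have hc : s⁻¹ * (s ^ (j + 1) * t) = s ^ j * t := by
        rw [pow_succ]
        field_simp
      rw [hc]
    have hdecomp : G w - (s ^ j * t) • ((1:ℂ), (0:ℂ)) = Λ (w - mid) + (G w - Λ w) := by
      rw [← hΛmid, map_sub]
      abel
    rw [hdecomp]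
    have h1 : ‖Λ (w - mid)‖ ≤ ‖s‖⁻¹ * (Kc * ‖t‖ ^ 2 * ‖s‖ ^ (2 * (j + 1))) := by
      calc ‖Λ (w - mid)‖ ≤ ‖s‖⁻¹ * ‖w - mid‖ := hΛnorm _
      _ ≤ ‖s‖⁻¹ * (Kc * ‖t‖ ^ 2 * ‖s‖ ^ (2 * (j + 1))) := by
          have h0 : (0:ℝ) ≤ ‖s‖⁻¹ := inv_nonneg.mpr (norm_nonneg s)
          nlinarith [hIH]
    have h2 : ‖G w - Λ w‖ ≤ K₂ * (2 * (‖s‖ ^ (j + 1) * ‖t‖)) ^ 2 := by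
      calc ‖G w - Λ w‖ ≤ K₂ * ‖w‖ ^ 2 := hq
      _ ≤ K₂ * (2 * (‖s‖ ^ (j + 1) * ‖t‖)) ^ 2 := by
          have hw2 : ‖w‖ ^ 2 ≤ (2 * (‖s‖ ^ (j + 1) * ‖t‖)) ^ 2 :=
            pow_le_pow_left₀ (norm_nonneg w) hwn 2
          exact mul_le_mul_of_nonneg_left hw2 hK₂pos.le
    calc ‖Λ (w - mid) + (G w - Λ w)‖ ≤ ‖Λ (w - mid)‖ + ‖G w - Λ w‖ := norm_add_le _ _
    _ ≤ ‖s‖⁻¹ * (Kc * ‖t‖ ^ 2 * ‖s‖ ^ (2 * (j + 1))) + K₂ * (2 * (‖s‖ ^ (j + 1) * ‖t‖)) ^ 2 := by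
        linarith
    _ ≤ Kc * ‖t‖ ^ 2 * ‖s‖ ^ (2 * j) := by
        have hexp1 : ‖s‖ ^ (2 * (j + 1)) = ‖s‖ ^ (2 * j) * ‖s‖ ^ 2 := by
          rw [← pow_add]; ring_nf
        have hexp2 : (2 * (‖s‖ ^ (j + 1) * ‖t‖)) ^ 2
            = 4 * (‖s‖ ^ (2 * j) * ‖s‖ ^ 2 * ‖t‖ ^ 2) := by
          rw [mul_pow, mul_pow, ← pow_mul]
          ring_nf
        rw [hexp1, hexp2]
        have hσs2 : ‖s‖⁻¹ * ‖s‖ ^ 2 = ‖s‖ := by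
          rw [sq, ← mul_assoc, inv_mul_cancel₀ (ne_of_gt hspos), one_mul]
        have expand : ‖s‖⁻¹ * (Kc * ‖t‖ ^ 2 * (‖s‖ ^ (2 * j) * ‖s‖ ^ 2))
            = Kc * ‖s‖ * (‖t‖ ^ 2 * ‖s‖ ^ (2 * j)) := by
          calc ‖s‖⁻¹ * (Kc * ‖t‖ ^ 2 * (‖s‖ ^ (2 * j) * ‖s‖ ^ 2))
              = Kc * (‖s‖⁻¹ * ‖s‖ ^ 2) * (‖t‖ ^ 2 * ‖s‖ ^ (2 * j)) := by ring
          _ = Kc * ‖s‖ * (‖t‖ ^ 2 * ‖s‖ ^ (2 * j)) := by rw [hσs2]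
        rw [expand]
        nlinarith [hKckey, pow_nonneg (norm_nonneg s) (2 * j), norm_nonneg t,
          pow_nonneg (norm_nonneg t) 2, mul_nonneg (pow_nonneg (norm_nonneg t) 2)
            (pow_nonneg (norm_nonneg s) (2 * j))]



set_option maxHeartbeats 1000000 in
open Metric Filter in
lemma iter_norm_bound (G : ℂ × ℂ → ℂ × ℂ) (s : ℂ) (Λ : ℂ × ℂ →L[ℂ] ℂ × ℂ)
    (K₂ Kc r : ℝ) (hs : ‖s‖ < 1) (hs0 : s ≠ 0) (hK₂pos : 0 < K₂)
    (hquad : ∀ z : ℂ × ℂ, ‖z‖ ≤ 1 → ‖G z - Λ z‖ ≤ K₂ * ‖z‖ ^ 2)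
    (hΛnorm : ∀ z : ℂ × ℂ, ‖Λ z‖ ≤ ‖s‖⁻¹ * ‖z‖)
    (hΛe : ∀ c : ℂ, Λ (c • ((1:ℂ), (0:ℂ))) = (s⁻¹ * c) • ((1:ℂ), (0:ℂ)))
    (hKcpos : 0 < Kc) (hKckey : Kc * ‖s‖ + 4 * K₂ * ‖s‖ ^ 2 ≤ Kc)
    (hrpos : 0 < r) (hrK : Kc * r ≤ 1) (hr1 : 2 * r ≤ 1) :
    ∀ k j : ℕ, ∀ t : ℂ, ‖t‖ ≤ r →
      ‖G^[k] ((s ^ (k + j) * t) • ((1:ℂ), (0:ℂ)))‖ ≤ 2 * ‖t‖ := by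
  intro k j t ht
  have hcore := core_estimate G s Λ K₂ Kc r hs hs0 hK₂pos hquad hΛnorm hΛe hKcpos hKckey
    hrpos hrK hr1 k j t ht
  have hne₁ : ∀ c : ℂ, ‖c • ((1:ℂ), (0:ℂ))‖ = ‖c‖ := by
    intro c
    rw [Prod.smul_def]
    simp [Prod.norm_def]
  have h1 : ‖G^[k] ((s ^ (k + j) * t) • ((1:ℂ), (0:ℂ)))‖
      ≤ ‖(s ^ j * t) • ((1:ℂ), (0:ℂ))‖ + Kc * ‖t‖ ^ 2 * ‖s‖ ^ (2 * j) := by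
    have h2 := norm_add_le ((s ^ j * t) • ((1:ℂ), (0:ℂ)))
      (G^[k] ((s ^ (k + j) * t) • ((1:ℂ), (0:ℂ))) - (s ^ j * t) • ((1:ℂ), (0:ℂ)))
    simp only [add_sub_cancel] at h2
    linarith [hcore]
  rw [hne₁, norm_mul, norm_pow] at h1
  have hsj : ‖s‖ ^ j ≤ 1 := pow_le_one₀ (norm_nonneg s) hs.le
  have hs2j : ‖s‖ ^ (2 * j) ≤ 1 := pow_le_one₀ (norm_nonneg s) hs.le
  have hKt : Kc * ‖t‖ ≤ 1 := by nlinarith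
  have ht0 : 0 ≤ ‖t‖ := norm_nonneg t
  have hterm1 : ‖s‖ ^ j * ‖t‖ ≤ ‖t‖ := by nlinarith
  have hterm2 : Kc * ‖t‖ ^ 2 * ‖s‖ ^ (2 * j) ≤ ‖t‖ := by
    nlinarith [pow_nonneg (norm_nonneg s) (2 * j), mul_nonneg (mul_nonneg hKcpos.le ht0) ht0]
  linarith

set_option maxHeartbeats 1000000 in
open Metric Filter in
lemma cauchy_chain (G : ℂ × ℂ → ℂ × ℂ) (s : ℂ) (Λ : ℂ × ℂ →L[ℂ] ℂ × ℂ)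
    (K₂ Kc r ρ Λ' : ℝ) (hs : ‖s‖ < 1) (hs0 : s ≠ 0) (hK₂pos : 0 < K₂)
    (hquad : ∀ z : ℂ × ℂ, ‖z‖ ≤ 1 → ‖G z - Λ z‖ ≤ K₂ * ‖z‖ ^ 2)
    (hΛnorm : ∀ z : ℂ × ℂ, ‖Λ z‖ ≤ ‖s‖⁻¹ * ‖z‖)
    (hΛe : ∀ c : ℂ, Λ (c • ((1:ℂ), (0:ℂ))) = (s⁻¹ * c) • ((1:ℂ), (0:ℂ)))
    (hKcpos : 0 < Kc) (hKckey : Kc * ‖s‖ + 4 * K₂ * ‖s‖ ^ 2 ≤ Kc)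
    (hrpos : 0 < r) (hrK : Kc * r ≤ 1) (hr1 : 2 * r ≤ 1) (hrρ : 2 * r ≤ ρ)
    (hΛ'pos : 0 < Λ')
    (hLip : ∀ z ∈ closedBall (0 : ℂ × ℂ) ρ, ∀ w ∈ closedBall (0 : ℂ × ℂ) ρ,
      ‖G z - G w‖ ≤ Λ' * ‖z - w‖) :
    ∀ n : ℕ, ∀ t : ℂ, ‖t‖ ≤ r →
      ‖G^[n + 1] ((s ^ (n + 1) * t) • ((1:ℂ), (0:ℂ)))
        - G^[n] ((s ^ n * t) • ((1:ℂ), (0:ℂ)))‖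
        ≤ (K₂ * r ^ 2 * ‖s‖ ^ 2) * (Λ' * ‖s‖ ^ 2) ^ n := by
  have hspos : 0 < ‖s‖ := norm_pos_iff.mpr hs0
  have hne₁ : ∀ c : ℂ, ‖c • ((1:ℂ), (0:ℂ))‖ = ‖c‖ := by
    intro c
    rw [Prod.smul_def]
    simp [Prod.norm_def]
  intro n t ht
  set e₁ : ℂ × ℂ := ((1:ℂ), (0:ℂ)) with he₁def
  set A : ℂ × ℂ := G ((s ^ (n + 1) * t) • e₁) with hAdef
  set B : ℂ × ℂ := (s ^ n * t) • e₁ with hBdef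
  -- step-1 estimate
  have hsn1 : ‖(s ^ (n + 1) * t) • e₁‖ = ‖s‖ ^ (n + 1) * ‖t‖ := by
    rw [hne₁, norm_mul, norm_pow]
  have hz1 : ‖(s ^ (n + 1) * t) • e₁‖ ≤ 1 := by
    rw [hsn1]
    have h1 : ‖s‖ ^ (n + 1) ≤ 1 := pow_le_one₀ (norm_nonneg s) hs.le
    nlinarith [norm_nonneg t, pow_nonneg (norm_nonneg s) (n + 1)]
  have hΛz : Λ ((s ^ (n + 1) * t) • e₁) = B := by
    rw [hΛe, hBdef]
    congr 1
    rw [pow_succ]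
    field_simp
  have hAB : ‖A - B‖ ≤ K₂ * ‖t‖ ^ 2 * ‖s‖ ^ (2 * n + 2) := by
    have h1 := hquad _ hz1
    rw [hΛz] at h1
    rw [hAdef]
    calc ‖A - B‖ ≤ K₂ * ‖(s ^ (n + 1) * t) • e₁‖ ^ 2 := h1
    _ = K₂ * ‖t‖ ^ 2 * ‖s‖ ^ (2 * n + 2) := by
        rw [hsn1, mul_pow, ← pow_mul]
        ring_nf
  -- membership bounds
  have hmemB : ∀ k : ℕ, k ≤ n → G^[k] B ∈ closedBall (0 : ℂ × ℂ) ρ := by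
    intro k hk
    have hknk : k + (n - k) = n := by omega
    have := iter_norm_bound G s Λ K₂ Kc r hs hs0 hK₂pos hquad hΛnorm hΛe hKcpos hKckey
      hrpos hrK hr1 k (n - k) t ht
    rw [hknk] at this
    rw [mem_closedBall, dist_zero_right]
    calc ‖G^[k] B‖ ≤ 2 * ‖t‖ := this
    _ ≤ 2 * r := by linarith [norm_nonneg t]
    _ ≤ ρ := by linarith
  have hmemA : ∀ k : ℕ, k ≤ n → G^[k] A ∈ closedBall (0 : ℂ × ℂ) ρ := by
    intro k hk
    have hkn : (k + 1) + (n - k) = n + 1 := by omega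
    have hbnd := iter_norm_bound G s Λ K₂ Kc r hs hs0 hK₂pos hquad hΛnorm hΛe hKcpos hKckey
      hrpos hrK hr1 (k + 1) (n - k) t ht
    rw [hkn] at hbnd
    have hiter : G^[k] A = G^[k + 1] ((s ^ (n + 1) * t) • e₁) := by
      rw [Function.iterate_succ_apply]
    rw [mem_closedBall, dist_zero_right, hiter]
    calc ‖G^[k + 1] ((s ^ (n + 1) * t) • e₁)‖ ≤ 2 * ‖t‖ := hbnd
    _ ≤ 2 * r := by linarith [norm_nonneg t]
    _ ≤ ρ := by linarith
  -- Lipschitz iteration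
  have hchain : ∀ k : ℕ, k ≤ n →
      ‖G^[k] A - G^[k] B‖ ≤ Λ' ^ k * (K₂ * ‖t‖ ^ 2 * ‖s‖ ^ (2 * n + 2)) := by
    intro k
    induction k with
    | zero =>
      intro _
      simpa using hAB
    | succ k ihk =>
      intro hk1
      have hk : k ≤ n := by omega
      rw [Function.iterate_succ_apply', Function.iterate_succ_apply']
      calc ‖G (G^[k] A) - G (G^[k] B)‖ ≤ Λ' * ‖G^[k] A - G^[k] B‖ :=
        hLip _ (hmemA k hk) _ (hmemB k hk)
      _ ≤ Λ' * (Λ' ^ k * (K₂ * ‖t‖ ^ 2 * ‖s‖ ^ (2 * n + 2))) := by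
          have := ihk hk
          nlinarith
      _ = Λ' ^ (k + 1) * (K₂ * ‖t‖ ^ 2 * ‖s‖ ^ (2 * n + 2)) := by ring
  have hfinal := hchain n (le_refl n)
  have heq : G^[n + 1] ((s ^ (n + 1) * t) • e₁) = G^[n] A := by
    rw [Function.iterate_succ_apply, hAdef]
  rw [heq]
  calc ‖G^[n] A - G^[n] B‖ ≤ Λ' ^ n * (K₂ * ‖t‖ ^ 2 * ‖s‖ ^ (2 * n + 2)) := hfinal
  _ ≤ (K₂ * r ^ 2 * ‖s‖ ^ 2) * (Λ' * ‖s‖ ^ 2) ^ n := by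
      have hexp : ‖s‖ ^ (2 * n + 2) = (‖s‖ ^ 2) ^ n * ‖s‖ ^ 2 := by
        rw [← pow_mul, ← pow_add]
      have hpow : (Λ' * ‖s‖ ^ 2) ^ n = Λ' ^ n * (‖s‖ ^ 2) ^ n := mul_pow _ _ _
      rw [hexp, hpow]
      have ht2 : ‖t‖ ^ 2 ≤ r ^ 2 := pow_le_pow_left₀ (norm_nonneg t) ht 2
      have h1 : (0:ℝ) ≤ Λ' ^ n := pow_nonneg hΛ'pos.le n
      have h2 : (0:ℝ) ≤ (‖s‖ ^ 2) ^ n := pow_nonneg (by positivity) n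
      have h3 : (0:ℝ) ≤ ‖s‖ ^ 2 := by positivity
      nlinarith [mul_nonneg (mul_nonneg h1 h2) h3, mul_nonneg h1 h3,
        mul_nonneg (mul_nonneg hK₂pos.le h1) (mul_nonneg h2 h3)]



open Metric in
set_option maxHeartbeats 2000000 in
open Metric Filter in
lemma local_stable_curve (G : ℂ × ℂ → ℂ × ℂ) (s μ : ℂ)
    (hG : ContDiff ℂ ⊤ G) (hG0 : G 0 = 0)
    (hs0 : s ≠ 0) (hs : ‖s‖ < 1) (hμ : ‖μ‖ ≤ 1)
    (Λ : ℂ × ℂ →L[ℂ] ℂ × ℂ)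
    (hΛdef : ∀ z : ℂ × ℂ, Λ z = (s⁻¹ * z.1, μ * z.2))
    (hfd : HasFDerivAt G Λ 0) :
    ∃ r : ℝ, 0 < r ∧ ∃ K : ℝ, 0 < K ∧ ∃ ζ : ℂ → ℂ × ℂ,
      DifferentiableOn ℂ ζ (ball 0 r) ∧ ζ 0 = 0 ∧
      (∀ t : ℂ, ‖t‖ < r → G (ζ (s * t)) = ζ t) ∧
      (∀ t : ℂ, ‖t‖ < r → ‖ζ t - t • ((1 : ℂ), (0 : ℂ))‖ ≤ K * ‖t‖ ^ 2) := by
  set e₁ : ℂ × ℂ := ((1 : ℂ), (0 : ℂ)) with he₁def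
  have he₁ : ∀ c : ℂ, c • e₁ = (c, 0) := by
    intro c; simp [he₁def, Prod.smul_def]
  have hne₁ : ∀ c : ℂ, ‖c • e₁‖ = ‖c‖ := by
    intro c; rw [he₁]; simp [Prod.norm_def]
  have hspos : 0 < ‖s‖ := norm_pos_iff.mpr hs0
  set σa : ℝ := ‖s‖⁻¹ with hσadef
  have hσa1 : 1 < σa := (one_lt_inv₀ hspos).2 hs
  have hσas : σa * ‖s‖ = 1 := inv_mul_cancel₀ (ne_of_gt hspos)
  have hΛe : ∀ c : ℂ, Λ (c • e₁) = (s⁻¹ * c) • e₁ := by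
    intro c
    rw [he₁, he₁, hΛdef]
    simp
  -- derivative of G
  have hGdiff : Differentiable ℂ G := hG.differentiable (by simp)
  set F : ℂ × ℂ → (ℂ × ℂ →L[ℂ] ℂ × ℂ) := fderiv ℂ G with hFdef
  have hF0 : F 0 = Λ := hfd.fderiv
  have hFc : ContDiff ℂ ⊤ F := hG.fderiv_right le_top
  have hFdiff : Differentiable ℂ F := hFc.differentiable (by simp)
  have hF2cont : Continuous fun z => ‖fderiv ℂ F z‖ := (hFc.continuous_fderiv (by simp)).norm
  obtain ⟨K₂', hK₂'⟩ := (isCompact_closedBall (0 : ℂ × ℂ) 1).exists_bound_of_continuousOn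
    hF2cont.continuousOn
  set K₂ : ℝ := max K₂' 1 with hK₂def
  have hK₂pos : 0 < K₂ := lt_of_lt_of_le one_pos (le_max_right _ _)
  have hK₂ : ∀ z ∈ closedBall (0 : ℂ × ℂ) 1, ‖fderiv ℂ F z‖ ≤ K₂ :=
    fun z hz => le_trans (le_trans (le_abs_self _) (by simpa using hK₂' z hz)) (le_max_left _ _)
  -- derivative Lipschitz through 0
  have hFlip : ∀ z ∈ closedBall (0 : ℂ × ℂ) 1, ‖F z - Λ‖ ≤ K₂ * ‖z‖ := by
    intro z hz
    have h0m : (0 : ℂ × ℂ) ∈ closedBall (0 : ℂ × ℂ) 1 := mem_closedBall_self zero_le_one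
    have := Convex.norm_image_sub_le_of_norm_hasFDerivWithin_le
      (f := F) (f' := fun x => fderiv ℂ F x) (s := closedBall (0 : ℂ × ℂ) 1) (C := K₂)
      (fun x _ => (hFdiff x).hasFDerivAt.hasFDerivWithinAt) hK₂ (convex_closedBall _ _) h0m hz
    simpa [hF0] using this
  -- quadratic estimate
  have hquad : ∀ z : ℂ × ℂ, ‖z‖ ≤ 1 → ‖G z - Λ z‖ ≤ K₂ * ‖z‖ ^ 2 := by
    intro z hz
    have hzsub : closedBall (0 : ℂ × ℂ) ‖z‖ ⊆ closedBall 0 1 :=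
      closedBall_subset_closedBall hz
    have h0m : (0 : ℂ × ℂ) ∈ closedBall (0 : ℂ × ℂ) ‖z‖ := mem_closedBall_self (norm_nonneg z)
    have hzm : z ∈ closedBall (0 : ℂ × ℂ) ‖z‖ := by
      simp [mem_closedBall, dist_eq_norm]
    have hmv := Convex.norm_image_sub_le_of_norm_hasFDerivWithin_le
      (f := fun w => G w - Λ w) (f' := fun x => F x - Λ) (s := closedBall (0 : ℂ × ℂ) ‖z‖)
      (C := K₂ * ‖z‖)
      (fun x _ => ((hGdiff x).hasFDerivAt.sub Λ.hasFDerivAt).hasFDerivWithinAt)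
      (fun x hx => by
        have hx1 : x ∈ closedBall (0 : ℂ × ℂ) 1 := hzsub hx
        have hxz : ‖x‖ ≤ ‖z‖ := by simpa [mem_closedBall, dist_eq_norm] using hx
        calc ‖F x - Λ‖ ≤ K₂ * ‖x‖ := hFlip x hx1
        _ ≤ K₂ * ‖z‖ := by nlinarith)
      (convex_closedBall _ _) h0m hzm
    have h0 : G 0 - Λ 0 = 0 := by simp [hG0]
    calc ‖G z - Λ z‖ = ‖(G z - Λ z) - (G 0 - Λ 0)‖ := by rw [h0, sub_zero]
    _ ≤ K₂ * ‖z‖ * ‖z - 0‖ := hmv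
    _ = K₂ * ‖z‖ ^ 2 := by rw [sub_zero]; ring
  -- norm bound for Λ
  have hΛnorm : ∀ z : ℂ × ℂ, ‖Λ z‖ ≤ σa * ‖z‖ := by
    intro z
    rw [hΛdef z]
    have h1 : ‖s⁻¹ * z.1‖ ≤ σa * ‖z‖ := by
      rw [norm_mul, norm_inv]
      have := norm_fst_le z
      have h0 : (0:ℝ) ≤ ‖s‖⁻¹ := inv_nonneg.mpr (norm_nonneg s)
      nlinarith
    have h2 : ‖μ * z.2‖ ≤ σa * ‖z‖ := by
      rw [norm_mul]
      have := norm_snd_le z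
      have := norm_nonneg z.2
      nlinarith [norm_nonneg z, norm_nonneg μ]
    exact max_le h1 h2
  have hΛop : ‖Λ‖ ≤ σa := Λ.opNorm_le_bound (by positivity) hΛnorm
  -- Lipschitz estimate on a small ball
  set Λ' : ℝ := (σa + σa ^ 2) / 2 with hΛ'def
  have hΛ'1 : σa < Λ' := by nlinarith
  have hΛ'2 : Λ' < σa ^ 2 := by nlinarith
  have hΛ'pos : 0 < Λ' := by nlinarith
  set ρ : ℝ := min 1 ((σa ^ 2 - σa) / (2 * K₂)) with hρdef
  have hρpos : 0 < ρ := lt_min one_pos (div_pos (by nlinarith) (by positivity))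
  have hρ1 : ρ ≤ 1 := min_le_left _ _
  have hLip : ∀ z ∈ closedBall (0 : ℂ × ℂ) ρ, ∀ w ∈ closedBall (0 : ℂ × ℂ) ρ,
      ‖G z - G w‖ ≤ Λ' * ‖z - w‖ := by
    intro z hz w hw
    refine Convex.norm_image_sub_le_of_norm_hasFDerivWithin_le
      (f := G) (f' := F) (s := closedBall (0 : ℂ × ℂ) ρ)
      (fun x _ => (hGdiff x).hasFDerivAt.hasFDerivWithinAt)
      (fun x hx => ?_) (convex_closedBall _ _) hw hz
    have hx1 : x ∈ closedBall (0 : ℂ × ℂ) 1 := closedBall_subset_closedBall hρ1 hx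
    have hxρ : ‖x‖ ≤ ρ := by simpa [mem_closedBall, dist_eq_norm] using hx
    have hρ2 : ρ ≤ (σa ^ 2 - σa) / (2 * K₂) := min_le_right _ _
    calc ‖F x‖ = ‖Λ + (F x - Λ)‖ := by rw [add_sub_cancel]
    _ ≤ ‖Λ‖ + ‖F x - Λ‖ := norm_add_le _ _
    _ ≤ σa + K₂ * ‖x‖ := add_le_add hΛop (hFlip x hx1)
    _ ≤ Λ' := by
        have h4 : K₂ * ρ ≤ (σa ^ 2 - σa) / 2 := by
          rw [div_mul_eq_div_div] at hρ2
          calc K₂ * ρ ≤ K₂ * ((σa ^ 2 - σa) / 2 / K₂) := by nlinarith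
          _ = (σa ^ 2 - σa) / 2 := by field_simp
        nlinarith
  -- constants
  have hden : (0:ℝ) < 1 - ‖s‖ := by linarith
  set Kc : ℝ := 4 * K₂ * ‖s‖ ^ 2 / (1 - ‖s‖) + 1 with hKcdef
  have hdiv0 : 0 ≤ 4 * K₂ * ‖s‖ ^ 2 / (1 - ‖s‖) := div_nonneg (by positivity) hden.le
  have hKcpos : 0 < Kc := by rw [hKcdef]; linarith
  have hKckey : Kc * ‖s‖ + 4 * K₂ * ‖s‖ ^ 2 ≤ Kc := by
    have h1 : 4 * K₂ * ‖s‖ ^ 2 / (1 - ‖s‖) * (1 - ‖s‖) = 4 * K₂ * ‖s‖ ^ 2 :=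
      div_mul_cancel₀ _ (ne_of_gt hden)
    rw [hKcdef]
    nlinarith [h1, hs, hspos]
  set r : ℝ := min (ρ / 2) (min (1 / Kc) (1 / 2)) with hrdef
  have hrpos : 0 < r := lt_min (by positivity) (lt_min (by positivity) (by norm_num))
  have hrρ : 2 * r ≤ ρ := by
    have := min_le_left (ρ / 2) (min (1 / Kc) (1 / 2))
    linarith
  have hrK : Kc * r ≤ 1 := by
    have h1 : r ≤ 1 / Kc := le_trans (min_le_right _ _) (min_le_left _ _)
    rw [le_div_iff₀ hKcpos] at h1
    linarith [h1]
  have hr1 : 2 * r ≤ 1 := by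
    have := le_trans (min_le_right (ρ / 2) (min (1 / Kc) (1 / 2))) (min_le_right _ _)
    linarith
  -- the sequence and its limit
  have hcore := core_estimate G s Λ K₂ Kc r hs hs0 hK₂pos hquad hΛnorm hΛe hKcpos hKckey
    hrpos hrK hr1
  have hchain := cauchy_chain G s Λ K₂ Kc r ρ Λ' hs hs0 hK₂pos hquad hΛnorm hΛe hKcpos hKckey
    hrpos hrK hr1 hrρ hΛ'pos hLip
  set Z : ℕ → ℂ → ℂ × ℂ := fun n t => G^[n] ((s ^ n * t) • e₁) with hZdef
  set B₀ : ℝ := K₂ * r ^ 2 * ‖s‖ ^ 2 with hB₀def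
  set q : ℝ := Λ' * ‖s‖ ^ 2 with hqdef
  have hq0 : 0 ≤ q := by positivity
  have hq1 : q < 1 := by
    have h1 : (σa * ‖s‖) ^ 2 = 1 := by rw [hσas]; norm_num
    have h2 : σa ^ 2 * ‖s‖ ^ 2 = 1 := by rw [← mul_pow]; exact h1
    calc q = Λ' * ‖s‖ ^ 2 := rfl
    _ < σa ^ 2 * ‖s‖ ^ 2 := by nlinarith [pow_pos hspos 2]
    _ = 1 := h2
  have hZcauchy : ∀ t : ℂ, ‖t‖ ≤ r → CauchySeq (fun n => Z n t) := by
    intro t ht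
    refine cauchySeq_of_le_geometric q B₀ hq1 (fun n => ?_)
    rw [dist_eq_norm, norm_sub_rev]
    exact hchain n t ht
  set ζ : ℂ → ℂ × ℂ := fun t => limUnder atTop (fun n => Z n t) with hζdef
  have htends : ∀ t : ℂ, ‖t‖ ≤ r → Tendsto (fun n => Z n t) atTop (nhds (ζ t)) :=
    fun t ht => (hZcauchy t ht).tendsto_limUnder
  have hdist : ∀ t : ℂ, ‖t‖ ≤ r → ∀ n, dist (Z n t) (ζ t) ≤ B₀ * q ^ n / (1 - q) := by
    intro t ht n
    refine dist_le_of_le_geometric_of_tendsto q B₀ hq1 (fun m => ?_) (htends t ht) n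
    rw [dist_eq_norm, norm_sub_rev]
    exact hchain m t ht
  have hunif : TendstoUniformlyOn (fun n t => Z n t) ζ atTop (ball (0:ℂ) r) := by
    rw [Metric.tendstoUniformlyOn_iff]
    intro ε hε
    have htend0 : Tendsto (fun n : ℕ => B₀ * q ^ n / (1 - q)) atTop (nhds 0) := by
      have h1 : Tendsto (fun n : ℕ => q ^ n) atTop (nhds 0) :=
        tendsto_pow_atTop_nhds_zero_of_lt_one hq0 hq1
      have h2 := (h1.const_mul B₀).div_const (1 - q)
      simpa using h2
    filter_upwards [htend0.eventually_lt_const hε] with n hn t hts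
    have ht : ‖t‖ ≤ r := by
      have := mem_ball_iff_norm.mp hts
      simpa using this.le
    calc dist (ζ t) (Z n t) = dist (Z n t) (ζ t) := dist_comm _ _
    _ ≤ B₀ * q ^ n / (1 - q) := hdist t ht n
    _ < ε := hn
  have hζdiff : DifferentiableOn ℂ ζ (ball (0:ℂ) r) := by
    refine hunif.tendstoLocallyUniformlyOn.differentiableOn (Eventually.of_forall fun n => ?_)
      isOpen_ball
    have h1 : Differentiable ℂ fun t : ℂ => (s ^ n * t) • e₁ :=
      (differentiable_id.const_mul (s ^ n)).smul_const e₁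
    exact ((hGdiff.iterate n).comp h1).differentiableOn
  have hZ0 : ∀ n, Z n 0 = 0 := by
    intro n
    have h1 : (s ^ n * 0) • e₁ = (0 : ℂ × ℂ) := by simp
    simp only [hZdef, h1]
    exact Function.iterate_fixed hG0 n
  have hζ0 : ζ 0 = 0 := by
    have h1 : Tendsto (fun n => Z n 0) atTop (nhds 0) := by
      simp only [hZ0]
      exact tendsto_const_nhds
    exact tendsto_nhds_unique (htends 0 (by simpa using hrpos.le)) h1
  refine ⟨r, hrpos, Kc, hKcpos, ζ, hζdiff, hζ0, ?_, ?_⟩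
  · -- functional equation
    intro t htr
    have hst : ‖s * t‖ ≤ r := by
      rw [norm_mul]
      nlinarith [norm_nonneg t, norm_nonneg s]
    have h2 : ∀ n, G (Z n (s * t)) = Z (n + 1) t := by
      intro n
      have h3 : s ^ n * (s * t) = s ^ (n + 1) * t := by rw [pow_succ]; ring
      simp only [hZdef, h3]
      rw [← Function.iterate_succ_apply' G]
    have h1 : Tendsto (fun n => G (Z n (s * t))) atTop (nhds (G (ζ (s * t)))) :=
      ((hG.continuous.tendsto _).comp (htends (s * t) hst))
    have h3 : Tendsto (fun n => Z (n + 1) t) atTop (nhds (ζ t)) :=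
      (htends t htr.le).comp (tendsto_add_atTop_nat 1)
    have h4 : Tendsto (fun n => G (Z n (s * t))) atTop (nhds (ζ t)) := by
      simp only [h2]
      exact h3
    exact tendsto_nhds_unique h1 h4
  · -- quadratic closeness
    intro t htr
    have h1 : Tendsto (fun n => ‖Z n t - t • e₁‖) atTop (nhds ‖ζ t - t • e₁‖) :=
      ((htends t htr.le).sub tendsto_const_nhds).norm
    refine le_of_tendsto h1 (Eventually.of_forall fun n => ?_)
    have h2 := hcore n 0 t htr.le
    simp only [Nat.add_zero, pow_zero, one_mul, Nat.mul_zero, mul_one] at h2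
    exact h2


set_option maxHeartbeats 2000000 in
open Metric Filter in
/-- Proposition 1.4. The stable manifold of a saddle fixed point of a
composition of generalized Hénon maps is not contained in the set `K⁻` of points with bounded
backward orbits. -/
theorem statement12 (f : Equiv.Perm (ℂ × ℂ))
    (L : List ((ℂ × ℂ) → ℂ × ℂ)) (hL : L ≠ []) (hLhen : ∀ h ∈ L, IsGenHenon h)
    (hf : ⇑f = L.foldr (· ∘ ·) id)
    (p₀ : ℂ × ℂ) (hfix : f p₀ = p₀)
    (M : Matrix (Fin 2) (Fin 2) ℂ) (hM : HasJacMatrix (⇑f) p₀ M)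
    (u s : ℂ) (htr : u + s = M.trace) (hdet : u * s = M.det)
    (hu : 1 < ‖u‖) (hs : ‖s‖ < 1) :
    ∃ q : ℂ × ℂ, Filter.Tendsto (fun n : ℕ => (f ^ n) q) Filter.atTop (nhds p₀) ∧
      ¬ ∃ R : ℝ, ∀ n : ℕ, ‖(f⁻¹ ^ n) q‖ ≤ R := by
  classical
  obtain ⟨R, hR1, gi, hgi1, hgi2, hgiCD, hfwd, hbwd⟩ := list_escape L hLhen
  set Ffun : ℂ × ℂ → ℂ × ℂ := L.foldr (· ∘ ·) id with hFfun
  have hfx : ∀ x, f x = Ffun x := fun x => congrFun hf x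
  have hFp₀ : Ffun p₀ = p₀ := by rw [← hfx]; exact hfix
  have hsymm : ∀ x, f.symm x = gi x := by
    intro x
    have h1 : gi (Ffun (f.symm x)) = f.symm x := hgi1 _
    rw [← hfx, Equiv.apply_symm_apply] at h1
    exact h1.symm
  have hgp₀ : gi p₀ = p₀ := by
    have := hgi1 p₀
    rw [hFp₀] at this
    exact this
  -- derivative of f at p₀
  obtain ⟨P, Q, hPQ, hMeq⟩ := hM
  have hfunc : ⇑f = fun q : ℂ × ℂ => (eval ![q.1, q.2] P, eval ![q.1, q.2] Q) := by
    funext q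
    rw [hPQ q]
    rfl
  set eP0 : ℂ := eval ![p₀.1, p₀.2] (pderiv 0 P) with heP0
  set eP1 : ℂ := eval ![p₀.1, p₀.2] (pderiv 1 P) with heP1
  set eQ0 : ℂ := eval ![p₀.1, p₀.2] (pderiv 0 Q) with heQ0
  set eQ1 : ℂ := eval ![p₀.1, p₀.2] (pderiv 1 Q) with heQ1
  have hm00 : M 0 0 = eP0 := by rw [hMeq]; simp [heP0]
  have hm01 : M 0 1 = eP1 := by rw [hMeq]; simp [heP1]
  have hm10 : M 1 0 = eQ0 := by rw [hMeq]; simp [heQ0]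
  have hm11 : M 1 1 = eQ1 := by rw [hMeq]; simp [heQ1]
  set Lf : (ℂ × ℂ) →L[ℂ] (ℂ × ℂ) :=
    (eP0 • (ContinuousLinearMap.fst ℂ ℂ ℂ) + eP1 • (ContinuousLinearMap.snd ℂ ℂ ℂ)).prod
      (eQ0 • (ContinuousLinearMap.fst ℂ ℂ ℂ) + eQ1 • (ContinuousLinearMap.snd ℂ ℂ ℂ))
    with hLfdef
  have hLfapp : ∀ z : ℂ × ℂ, Lf z = (eP0 * z.1 + eP1 * z.2, eQ0 * z.1 + eQ1 * z.2) := by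
    intro z
    simp [hLfdef, ContinuousLinearMap.prod_apply, ContinuousLinearMap.add_apply,
      ContinuousLinearMap.coe_smul', Pi.smul_apply, ContinuousLinearMap.coe_fst',
      ContinuousLinearMap.coe_snd', smul_eq_mul]
  have hLf : HasFDerivAt (⇑f) Lf p₀ := by
    rw [hfunc]
    exact (hasFDerivAt_evalmv P p₀).prodMk (hasFDerivAt_evalmv Q p₀)
  -- eigenvectors
  obtain ⟨vp, hvpne, hvp1, hvp2⟩ := eigvec M u s htr hdet s (Or.inr rfl)
  obtain ⟨wp, hwpne, hwp1, hwp2⟩ := eigvec M u s htr hdet u (Or.inl rfl)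
  have hvp : Lf vp = s • vp := by
    rw [hLfapp, Prod.smul_def]
    refine Prod.ext ?_ ?_
    · simp only [smul_eq_mul]
      rw [← hm00, ← hm01]
      exact hvp1
    · simp only [smul_eq_mul]
      rw [← hm10, ← hm11]
      exact hvp2
  have hwp : Lf wp = u • wp := by
    rw [hLfapp, Prod.smul_def]
    refine Prod.ext ?_ ?_
    · simp only [smul_eq_mul]
      rw [← hm00, ← hm01]
      exact hwp1
    · simp only [smul_eq_mul]
      rw [← hm10, ← hm11]
      exact hwp2
  -- derivative of gi at p₀ and inverse relations
  have hgd : Differentiable ℂ gi := hgiCD.differentiable (by simp)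
  set Lg : (ℂ × ℂ) →L[ℂ] (ℂ × ℂ) := fderiv ℂ gi p₀ with hLgdef
  have hgat : HasFDerivAt gi Lg p₀ := (hgd p₀).hasFDerivAt
  have hgat' : HasFDerivAt gi Lg (f p₀) := by rw [hfix]; exact hgat
  have hgf : ∀ x, gi (f x) = x := by
    intro x
    rw [hfx]
    exact hgi1 x
  have hfg : ∀ x, f (gi x) = x := by
    intro x
    rw [hfx]
    exact hgi2 x
  have hcomp1 : HasFDerivAt (gi ∘ ⇑f) (Lg.comp Lf) p₀ := hgat'.comp p₀ hLf
  have hid1 : gi ∘ ⇑f = id := funext fun x => hgf x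
  have hLgLf : Lg.comp Lf = ContinuousLinearMap.id ℂ (ℂ × ℂ) := by
    rw [hid1] at hcomp1
    exact hcomp1.unique (hasFDerivAt_id p₀)
  have hLf' : HasFDerivAt (⇑f) Lf (gi p₀) := by rw [hgp₀]; exact hLf
  have hcomp2 : HasFDerivAt (⇑f ∘ gi) (Lf.comp Lg) p₀ := hLf'.comp p₀ hgat
  have hid2 : ⇑f ∘ gi = id := funext fun x => hfg x
  have hLfLg : Lf.comp Lg = ContinuousLinearMap.id ℂ (ℂ × ℂ) := by
    rw [hid2] at hcomp2
    exact hcomp2.unique (hasFDerivAt_id p₀)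
  have hgfz : ∀ z, Lg (Lf z) = z := by
    intro z
    have := congrArg (fun (h : (ℂ × ℂ) →L[ℂ] (ℂ × ℂ)) => h z) hLgLf
    simpa using this
  have hfgz : ∀ z, Lf (Lg z) = z := by
    intro z
    have := congrArg (fun (h : (ℂ × ℂ) →L[ℂ] (ℂ × ℂ)) => h z) hLfLg
    simpa using this
  -- s and u nonzero, distinct
  have hu0 : u ≠ 0 := by
    intro h
    rw [h, norm_zero] at hu
    linarith
  have hs0 : s ≠ 0 := by
    intro h
    rw [h, zero_smul] at hvp
    have := hgfz vp
    rw [hvp, map_zero] at this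
    exact hvpne this.symm
  have hus : u ≠ s := by
    intro h
    rw [h] at hu
    linarith
  -- eigen equations for Lg
  have hLgvp : Lg vp = s⁻¹ • vp := by
    have h1 : Lg (Lf vp) = vp := hgfz vp
    rw [hvp, map_smul] at h1
    calc Lg vp = (s⁻¹ * s) • Lg vp := by rw [inv_mul_cancel₀ hs0, one_smul]
    _ = s⁻¹ • (s • Lg vp) := by rw [smul_smul]
    _ = s⁻¹ • vp := by rw [h1]
  have hLgwp : Lg wp = u⁻¹ • wp := by
    have h1 : Lg (Lf wp) = wp := hgfz wp
    rw [hwp, map_smul] at h1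
    calc Lg wp = (u⁻¹ * u) • Lg wp := by rw [inv_mul_cancel₀ hu0, one_smul]
    _ = u⁻¹ • (u • Lg wp) := by rw [smul_smul]
    _ = u⁻¹ • wp := by rw [h1]
  -- independence
  have hd0 : vp.1 * wp.2 - vp.2 * wp.1 ≠ 0 := eig_indep Lf vp wp s u hvp hwp hvpne hwpne
    (fun h => hus h.symm)
  set d : ℂ := vp.1 * wp.2 - vp.2 * wp.1 with hddef
  -- change of basis
  set T : (ℂ × ℂ) →L[ℂ] (ℂ × ℂ) :=
    (ContinuousLinearMap.fst ℂ ℂ ℂ).smulRight vp + (ContinuousLinearMap.snd ℂ ℂ ℂ).smulRight wp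
    with hTdef
  set Tinv : (ℂ × ℂ) →L[ℂ] (ℂ × ℂ) :=
    (ContinuousLinearMap.fst ℂ ℂ ℂ).smulRight (d⁻¹ • (wp.2, -vp.2))
      + (ContinuousLinearMap.snd ℂ ℂ ℂ).smulRight (d⁻¹ • (-wp.1, vp.1)) with hTinvdef
  have hTapp : ∀ z : ℂ × ℂ, T z = z.1 • vp + z.2 • wp := by
    intro z
    simp [hTdef, ContinuousLinearMap.add_apply, ContinuousLinearMap.smulRight_apply]
  have hTappc : ∀ z : ℂ × ℂ, T z = (z.1 * vp.1 + z.2 * wp.1, z.1 * vp.2 + z.2 * wp.2) := by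
    intro z
    rw [hTapp]
    simp [Prod.smul_def, smul_eq_mul]
  have hTinvapp : ∀ z : ℂ × ℂ,
      Tinv z = (d⁻¹ * (z.1 * wp.2 - z.2 * wp.1), d⁻¹ * (-(z.1 * vp.2) + z.2 * vp.1)) := by
    intro z
    simp only [hTinvdef, ContinuousLinearMap.add_apply, ContinuousLinearMap.smulRight_apply,
      ContinuousLinearMap.coe_fst', ContinuousLinearMap.coe_snd', Prod.smul_def, smul_eq_mul]
    refine Prod.ext ?_ ?_ <;> simp <;> ring
  have hTinvT : ∀ z : ℂ × ℂ, Tinv (T z) = z := by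
    intro z
    rw [hTappc, hTinvapp]
    refine Prod.ext ?_ ?_
    · simp only
      field_simp
      ring
    · simp only
      field_simp
      ring
  have hTTinv : ∀ z : ℂ × ℂ, T (Tinv z) = z := by
    intro z
    rw [hTinvapp, hTappc]
    refine Prod.ext ?_ ?_
    · simp only
      field_simp
      ring
    · simp only
      field_simp
      ring
  -- the conjugated map G
  set G : ℂ × ℂ → ℂ × ℂ := fun z => Tinv (gi (p₀ + T z) - p₀) with hGdef
  have hGC : ContDiff ℂ ⊤ G :=
    Tinv.contDiff.comp ((hgiCD.comp (contDiff_const.add T.contDiff)).sub contDiff_const)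
  have hG0 : G 0 = 0 := by
    simp only [hGdef, map_zero, add_zero, hgp₀, sub_self]
  set Λ : (ℂ × ℂ) →L[ℂ] (ℂ × ℂ) :=
    (s⁻¹ • (ContinuousLinearMap.fst ℂ ℂ ℂ)).prod (u⁻¹ • (ContinuousLinearMap.snd ℂ ℂ ℂ))
    with hΛdef'
  have hΛdef : ∀ z : ℂ × ℂ, Λ z = (s⁻¹ * z.1, u⁻¹ * z.2) := by
    intro z
    simp [hΛdef', ContinuousLinearMap.prod_apply, smul_eq_mul]
  have hGfd : HasFDerivAt G Λ 0 := by
    have h1 : HasFDerivAt (fun z : ℂ × ℂ => p₀ + T z) T 0 := T.hasFDerivAt.const_add p₀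
    have h2 : HasFDerivAt gi Lg (p₀ + T 0) := by
      rw [map_zero, add_zero]
      exact hgat
    have h3 : HasFDerivAt (fun z : ℂ × ℂ => gi (p₀ + T z)) (Lg.comp T) 0 := h2.comp 0 h1
    have h4 : HasFDerivAt (fun z : ℂ × ℂ => gi (p₀ + T z) - p₀) (Lg.comp T) 0 := h3.sub_const p₀
    have h5 : HasFDerivAt G (Tinv.comp (Lg.comp T)) 0 := Tinv.hasFDerivAt.comp 0 h4
    have h6 : Tinv.comp (Lg.comp T) = Λ := by
      refine ContinuousLinearMap.ext fun z => ?_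
      have hTz : Lg (T z) = T (s⁻¹ * z.1, u⁻¹ * z.2) := by
        rw [hTapp z, map_add, map_smul, map_smul, hLgvp, hLgwp, hTapp]
        simp only [smul_smul]
        rw [mul_comm z.1 s⁻¹, mul_comm z.2 u⁻¹]
      calc (Tinv.comp (Lg.comp T)) z = Tinv (Lg (T z)) := rfl
      _ = Tinv (T (s⁻¹ * z.1, u⁻¹ * z.2)) := by rw [hTz]
      _ = (s⁻¹ * z.1, u⁻¹ * z.2) := hTinvT _
      _ = Λ z := (hΛdef z).symm
    rw [← h6]
    exact h5
  -- apply the local stable curve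
  have hμ : ‖u⁻¹‖ ≤ 1 := by
    rw [norm_inv]
    exact inv_le_one_of_one_le₀ hu.le
  obtain ⟨r, hrpos, K, hKpos, ζ, hζdiff, hζ0, hζfeq, hζquad⟩ :=
    local_stable_curve G s u⁻¹ hGC hG0 hs0 hs hμ Λ hΛdef hGfd
  -- the stable curve ψ and its globalization Ψ
  set ψ : ℂ → ℂ × ℂ := fun t => p₀ + T (ζ t) with hψdef
  have hψ0 : ψ 0 = p₀ := by simp [hψdef, hζ0]
  have hgψ : ∀ t : ℂ, ‖t‖ < r → gi (ψ (s * t)) = ψ t := by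
    intro t ht
    have h1 := hζfeq t ht
    have h2 : T (G (ζ (s * t))) = T (ζ t) := by rw [h1]
    rw [hGdef] at h2
    simp only [hTTinv] at h2
    have h3 : gi (p₀ + T (ζ (s * t))) = p₀ + T (ζ t) := by
      have := congrArg (fun z => z + p₀) h2
      simpa [sub_add_cancel, add_comm] using this
    exact h3
  have hψdiffat : ∀ t : ℂ, ‖t‖ < r → DifferentiableAt ℂ ψ t := by
    intro t ht
    have h1 : DifferentiableAt ℂ ζ t :=
      hζdiff.differentiableAt (isOpen_ball.mem_nhds (by simpa [mem_ball, dist_eq_norm] using ht))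
    exact (T.differentiableAt.comp t h1).const_add p₀
  -- globalization
  have hsmall' : ∀ c : ℝ, ∃ m : ℕ, ‖s‖ ^ m * c < r := by
    intro c
    have h1 : Tendsto (fun m : ℕ => ‖s‖ ^ m * c) atTop (nhds (0 * c)) :=
      (tendsto_pow_atTop_nhds_zero_of_lt_one (norm_nonneg s) hs).mul_const c
    rw [zero_mul] at h1
    exact (h1.eventually_lt_const hrpos).exists
  set Nt : ℂ → ℕ := fun t => (hsmall' ‖t‖).choose with hNtdef
  have hNt : ∀ t : ℂ, ‖s‖ ^ (Nt t) * ‖t‖ < r := fun t => (hsmall' ‖t‖).choose_spec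
  set Ψ : ℂ → ℂ × ℂ := fun t => gi^[Nt t] (ψ (s ^ (Nt t) * t)) with hΨdef
  have hstepup : ∀ (m : ℕ) (t : ℂ), ‖s‖ ^ m * ‖t‖ < r →
      gi^[m + 1] (ψ (s ^ (m + 1) * t)) = gi^[m] (ψ (s ^ m * t)) := by
    intro m t hmt
    have harg : s ^ (m + 1) * t = s * (s ^ m * t) := by ring
    have hn : ‖s ^ m * t‖ < r := by
      rw [norm_mul, norm_pow]
      exact hmt
    rw [Function.iterate_succ_apply, harg, hgψ _ hn]
  have hmon : ∀ (m n : ℕ) (t : ℂ), m ≤ n → ‖s‖ ^ m * ‖t‖ < r → ‖s‖ ^ n * ‖t‖ < r := by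
    intro m n t hmn hm
    have h1 : ‖s‖ ^ n ≤ ‖s‖ ^ m := pow_le_pow_of_le_one (norm_nonneg s) hs.le hmn
    have h2 : ‖s‖ ^ n * ‖t‖ ≤ ‖s‖ ^ m * ‖t‖ := by
      exact mul_le_mul_of_nonneg_right h1 (norm_nonneg t)
    linarith
  have hup : ∀ (t : ℂ) (m n : ℕ), m ≤ n → ‖s‖ ^ m * ‖t‖ < r →
      gi^[n] (ψ (s ^ n * t)) = gi^[m] (ψ (s ^ m * t)) := by
    intro t m n hmn hm
    induction n, hmn using Nat.le_induction with
    | base => rfl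
    | succ n hn ih =>
      rw [hstepup n t (hmon m n t hn hm), ih]
  have hdesc : ∀ (m : ℕ) (t : ℂ), ‖s‖ ^ m * ‖t‖ < r → Ψ t = gi^[m] (ψ (s ^ m * t)) := by
    intro m t hm
    have h1 := hup t m (max m (Nt t)) (le_max_left _ _) hm
    have h2 := hup t (Nt t) (max m (Nt t)) (le_max_right _ _) (hNt t)
    rw [hΨdef]
    simp only
    rw [← h2, h1]
  have hΨψ : ∀ t : ℂ, ‖t‖ < r → Ψ t = ψ t := by
    intro t ht
    have := hdesc 0 t (by simpa using ht)
    simpa using this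
  have hΨ0 : Ψ 0 = p₀ := by
    rw [hΨψ 0 (by simpa using hrpos), hψ0]
  have hΨdiff : Differentiable ℂ Ψ := by
    intro t₀
    obtain ⟨m, hm⟩ := hsmall' (‖t₀‖ + 1)
    have ht₀1 : 0 ≤ ‖t₀‖ + 1 := by positivity
    have hloc : ∀ t ∈ ball t₀ 1, Ψ t = gi^[m] (ψ (s ^ m * t)) := by
      intro t ht
      refine hdesc m t ?_
      have h1 : ‖t‖ < ‖t₀‖ + 1 := by
        have h2 := mem_ball_iff_norm.mp ht
        calc ‖t‖ = ‖t₀ + (t - t₀)‖ := by ring_nf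
        _ ≤ ‖t₀‖ + ‖t - t₀‖ := norm_add_le _ _
        _ < ‖t₀‖ + 1 := by linarith
      calc ‖s‖ ^ m * ‖t‖ ≤ ‖s‖ ^ m * (‖t₀‖ + 1) := by
            exact mul_le_mul_of_nonneg_left h1.le (pow_nonneg (norm_nonneg s) m)
      _ < r := hm
    have hsm : ‖s ^ m * t₀‖ < r := by
      rw [norm_mul, norm_pow]
      calc ‖s‖ ^ m * ‖t₀‖ ≤ ‖s‖ ^ m * (‖t₀‖ + 1) := by
            refine mul_le_mul_of_nonneg_left (by linarith) (pow_nonneg (norm_nonneg s) m)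
      _ < r := hm
    have hrhs : DifferentiableAt ℂ (fun t => gi^[m] (ψ (s ^ m * t))) t₀ := by
      have h1 : DifferentiableAt ℂ (fun t : ℂ => s ^ m * t) t₀ :=
        (differentiableAt_id.const_mul _)
      have h2 : DifferentiableAt ℂ ψ (s ^ m * t₀) := hψdiffat _ hsm
      have h3 : DifferentiableAt ℂ (gi^[m]) (ψ (s ^ m * t₀)) :=
        (hgd.iterate m).differentiableAt
      exact h3.comp t₀ (h2.comp t₀ h1)
    have hEq : Ψ =ᶠ[nhds t₀] fun t => gi^[m] (ψ (s ^ m * t)) := by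
      filter_upwards [ball_mem_nhds t₀ one_pos] with t ht
      exact hloc t ht
    exact hrhs.congr_of_eventuallyEq hEq
  have hΨcont : Continuous Ψ := hΨdiff.continuous
  have hΨfeq : ∀ t : ℂ, Ffun (Ψ t) = Ψ (s * t) := by
    intro t
    obtain ⟨m, hm⟩ := hsmall' ‖t‖
    have hm1 : ‖s‖ ^ (m + 1) * ‖t‖ < r := hmon m (m + 1) t (by omega) hm
    have hst : ‖s‖ ^ m * ‖s * t‖ < r := by
      rw [norm_mul]
      calc ‖s‖ ^ m * (‖s‖ * ‖t‖) = ‖s‖ ^ (m + 1) * ‖t‖ := by rw [pow_succ]; ring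
      _ < r := hm1
    have h1 : Ψ t = gi^[m + 1] (ψ (s ^ (m + 1) * t)) := hdesc (m + 1) t hm1
    have h2 : Ψ (s * t) = gi^[m] (ψ (s ^ m * (s * t))) := hdesc m (s * t) hst
    rw [h1, h2]
    rw [Function.iterate_succ_apply']
    have h3 : Ffun (gi (gi^[m] (ψ (s ^ (m + 1) * t)))) = gi^[m] (ψ (s ^ (m + 1) * t)) := by
      have h4 := hfg (gi^[m] (ψ (s ^ (m + 1) * t)))
      rw [hfx] at h4
      exact h4
    rw [h3]
    congr 2
    ring
  have hforwardIter : ∀ (t : ℂ) (n : ℕ), Ffun^[n] (Ψ t) = Ψ (s ^ n * t) := by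
    intro t n
    induction n with
    | zero => simp
    | succ n ih =>
      rw [Function.iterate_succ_apply', ih, hΨfeq]
      congr 1
      rw [pow_succ]
      ring
  have hforward : ∀ t : ℂ, Tendsto (fun n : ℕ => Ffun^[n] (Ψ t)) atTop (nhds p₀) := by
    intro t
    have h1 : Tendsto (fun n : ℕ => s ^ n * t) atTop (nhds 0) := by
      have h2 := (tendsto_pow_atTop_nhds_zero_of_norm_lt_one hs).mul_const t
      simpa using h2
    have h3 : Tendsto (fun n : ℕ => Ψ (s ^ n * t)) atTop (nhds (Ψ 0)) :=
      (hΨcont.continuousAt.tendsto).comp h1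
    rw [hΨ0] at h3
    have h4 : (fun n : ℕ => Ffun^[n] (Ψ t)) = fun n : ℕ => Ψ (s ^ n * t) :=
      funext fun n => hforwardIter t n
    rw [h4]
    exact h3
  -- nonconstancy
  set t₁ : ℂ := ((min (r / 2) ((2 * K)⁻¹) : ℝ) : ℂ) with ht₁def
  have ht₁r : (0:ℝ) < min (r / 2) ((2 * K)⁻¹) := lt_min (by positivity) (by positivity)
  have hnt₁ : ‖t₁‖ = min (r / 2) ((2 * K)⁻¹) := by
    rw [ht₁def, Complex.norm_real]
    exact abs_of_pos ht₁r
  have ht₁pos : 0 < ‖t₁‖ := by rw [hnt₁]; exact ht₁r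
  have ht₁lt : ‖t₁‖ < r := by
    rw [hnt₁]
    calc min (r / 2) ((2 * K)⁻¹) ≤ r / 2 := min_le_left _ _
    _ < r := by linarith
  have ht₁K : K * ‖t₁‖ ≤ 1 / 2 := by
    rw [hnt₁]
    have h1 : min (r / 2) ((2 * K)⁻¹) ≤ (2 * K)⁻¹ := min_le_right _ _
    calc K * min (r / 2) ((2 * K)⁻¹) ≤ K * (2 * K)⁻¹ := by nlinarith
    _ = 1 / 2 := by
        rw [mul_inv, ← mul_assoc, mul_comm K 2⁻¹, mul_assoc, mul_inv_cancel₀ (ne_of_gt hKpos)]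
        norm_num
  have hζt₁ : ζ t₁ ≠ 0 := by
    intro hcon
    have h1 := hζquad t₁ ht₁lt
    rw [hcon] at h1
    have h2 : ‖(0 : ℂ × ℂ) - t₁ • ((1:ℂ), (0:ℂ))‖ = ‖t₁‖ := by
      rw [zero_sub, norm_neg]
      have : t₁ • ((1:ℂ), (0:ℂ)) = (t₁, 0) := by simp [Prod.smul_def]
      rw [this]
      simp [Prod.norm_def]
    rw [h2] at h1
    nlinarith [ht₁pos]
  have hΨt₁ : Ψ t₁ ≠ p₀ := by
    rw [hΨψ t₁ ht₁lt, hψdef]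
    simp only
    intro hcon
    have h1 : T (ζ t₁) = 0 := by
      have := congrArg (fun z => z - p₀) hcon
      simpa using this
    have h2 : ζ t₁ = 0 := by
      have := congrArg Tinv h1
      rw [hTinvT, map_zero] at this
      exact this
    exact hζt₁ h2
  -- unboundedness via Liouville
  have hUnb : ∀ Rb : ℝ, ∃ t : ℂ, Rb < ‖Ψ t‖ := by
    intro Rb
    by_contra hcon
    push_neg at hcon
    have hbd : Bornology.IsBounded (Set.range Ψ) := by
      refine (Metric.isBounded_closedBall (x := (0 : ℂ × ℂ)) (r := Rb)).subset ?_
      rintro _ ⟨t, rfl⟩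
      simpa [mem_closedBall, dist_eq_norm] using hcon t
    have := hΨdiff.apply_eq_apply_of_bounded hbd t₁ 0
    rw [hΨ0] at this
    exact hΨt₁ this
  -- choose an escaping point on the stable curve
  obtain ⟨t₂, ht₂⟩ := hUnb R
  set q : ℂ × ℂ := Ψ t₂ with hqdef
  have hqfwd : Tendsto (fun n : ℕ => Ffun^[n] q) atTop (nhds p₀) := hforward t₂
  refine ⟨q, ?_, ?_⟩
  · have h1 : (fun n : ℕ => (f ^ n) q) = fun n : ℕ => Ffun^[n] q := by
      funext n
      show (⇑(f ^ n)) q = Ffun^[n] q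
      rw [Equiv.Perm.coe_pow, hf]
    rw [h1]
    exact hqfwd
  · rintro ⟨Rb, hRb⟩
    have hRb' : ∀ n : ℕ, ‖gi^[n] q‖ ≤ Rb := by
      intro n
      have h1 : (f⁻¹ ^ n) q = gi^[n] q := by
        have h2 : ⇑(f⁻¹ ^ n) = (⇑f.symm)^[n] := by
          rw [Equiv.Perm.coe_pow]
          rfl
        have h3 : ⇑f.symm = gi := funext hsymm
        show (⇑(f⁻¹ ^ n)) q = gi^[n] q
        rw [h2, h3]
      rw [← h1]
      exact hRb n
    -- forward orbit is bounded
    obtain ⟨Bf, hBf⟩ : ∃ Bf : ℝ, ∀ n : ℕ, ‖Ffun^[n] q‖ ≤ Bf := by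
      have h1 : Tendsto (fun n : ℕ => ‖Ffun^[n] q‖) atTop (nhds ‖p₀‖) := hqfwd.norm
      obtain ⟨Bf, hBf⟩ := h1.bddAbove_range
      exact ⟨Bf, fun n => hBf (Set.mem_range_self n)⟩
    have hlen : (2:ℝ) ≤ 2 ^ L.length := by
      have h1 : 1 ≤ L.length := List.length_pos_iff.mpr hL
      calc (2:ℝ) = 2 ^ 1 := by norm_num
      _ ≤ 2 ^ L.length := pow_le_pow_right₀ (by norm_num) h1
    by_cases hcase : ‖q.1‖ ≤ ‖q.2‖
    · -- forward escape: contradiction with bounded forward orbit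
      have hq2 : R ≤ ‖q.2‖ := by
        have h1 : ‖q‖ = max ‖q.1‖ ‖q.2‖ := Prod.norm_def q
        have h2 : ‖q‖ = ‖q.2‖ := by rw [h1]; exact max_eq_right hcase
        rw [← h2]
        exact le_of_lt ht₂
      have hF : ∀ q' : ℂ × ℂ, ‖q'.1‖ ≤ ‖q'.2‖ → R ≤ ‖q'.2‖ →
          ‖(Ffun q').1‖ ≤ ‖(Ffun q').2‖ ∧ 2 * ‖q'.2‖ ≤ ‖(Ffun q').2‖ := by
        intro q' h1 h2
        obtain ⟨h3, h4⟩ := hfwd q' h1 h2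
        refine ⟨h3, ?_⟩
        have h5 : (0:ℝ) ≤ ‖q'.2‖ := norm_nonneg _
        nlinarith
      have hesc := iterate_escape_fwd Ffun R hR1 hF q hcase hq2
      obtain ⟨n, hn⟩ := pow_unbounded_of_one_lt (Bf : ℝ) (by norm_num : (1:ℝ) < 2)
      have h6 := (hesc n).2.2
      have h7 : ‖(Ffun^[n] q).2‖ ≤ ‖Ffun^[n] q‖ := norm_snd_le _
      have h8 := hBf n
      have h9 : (2:ℝ) ^ n ≤ 2 ^ n * ‖q.2‖ := by
        nlinarith [pow_pos (by norm_num : (0:ℝ) < 2) n]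
      linarith
    · -- backward escape: contradiction with hRb'
      push_neg at hcase
      have hq1 : R ≤ ‖q.1‖ := by
        have h1 : ‖q‖ = max ‖q.1‖ ‖q.2‖ := Prod.norm_def q
        have h2 : ‖q‖ = ‖q.1‖ := by rw [h1]; exact max_eq_left hcase.le
        rw [← h2]
        exact le_of_lt ht₂
      have hGmap : ∀ q' : ℂ × ℂ, ‖q'.2‖ ≤ ‖q'.1‖ → R ≤ ‖q'.1‖ →
          ‖(gi q').2‖ ≤ ‖(gi q').1‖ ∧ 2 * ‖q'.1‖ ≤ ‖(gi q').1‖ := by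
        intro q' h1 h2
        obtain ⟨h3, h4⟩ := hbwd q' h1 h2
        refine ⟨h3, ?_⟩
        have h5 : (0:ℝ) ≤ ‖q'.1‖ := norm_nonneg _
        nlinarith
      have hesc := iterate_escape_bwd gi R hR1 hGmap q hcase.le hq1
      obtain ⟨n, hn⟩ := pow_unbounded_of_one_lt (Rb : ℝ) (by norm_num : (1:ℝ) < 2)
      have h6 := (hesc n).2.2
      have h7 : ‖(gi^[n] q).1‖ ≤ ‖gi^[n] q‖ := norm_fst_le _
      have h8 := hRb' n
      have h9 : (2:ℝ) ^ n ≤ 2 ^ n * ‖q.1‖ := by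
        nlinarith [pow_pos (by norm_num : (0:ℝ) < 2) n]
      linarith
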